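/- Suppose the velocity potential field σ of a radial force field satisfies assumption (a2): Σ_{i=1}^{3} (∂F_i/∂T_i + ∂G_i/∂X_i) = 0 at all points of the form X = rα, T = tα with r, t > 0. Then the velocity s satisfies the partial differential equation γ_s ∂s/∂t + s ∂γ_s/∂t + ∂γ_s/∂r = 0 at every (r,t) with r, t > 0. -/

import Mathlib

open EuclideanSpace

lemma hasFDerivAt_norm_aux {E : Type*} [NormedAddCommGroup E] [InnerProductSpace ℝ E] {x : E}
    (hx : x ≠ 0) :
    HasFDerivAt (fun y : E => ‖y‖) (‖x‖⁻¹ • innerSL ℝ x) x := by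
  have h1 : HasFDerivAt (fun y : E => ‖y‖ ^ 2) (2 • innerSL ℝ x) x :=
    (hasStrictFDerivAt_norm_sq x).hasFDerivAt
  have hn : (0:ℝ) < ‖x‖ := norm_pos_iff.mpr hx
  have h2 : HasDerivAt Real.sqrt (1 / (2 * Real.sqrt (‖x‖ ^ 2))) (‖x‖ ^ 2) :=
    Real.hasDerivAt_sqrt (by positivity)
  have h3 := h2.comp_hasFDerivAt x h1
  have e1 : (Real.sqrt ∘ fun y : E => ‖y‖ ^ 2) = fun y : E => ‖y‖ := by
    funext y; simp [Real.sqrt_sq (norm_nonneg y)]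
  rw [e1] at h3
  refine h3.congr_fderiv ?_
  rw [Real.sqrt_sq (norm_nonneg x)]
  ext v
  simp [smul_smul]
  field_simp

open EuclideanSpace in
/-- If the velocity potential field σ of a radial force field, with e-parts
F_i(X,T) = γ_s(|X|,|T|) α_i s(|X|,|T|) and i-parts G_i(X,T) = γ_s(|X|,|T|) α_i,
satisfies assumption (a2): Σᵢ (∂F_i/∂T_i + ∂G_i/∂X_i) = 0 at all points with
X = rα, T = tα, r, t > 0, then the speed s satisfies
γ_s ∂s/∂t + s ∂γ_s/∂t + ∂γ_s/∂r = 0 for all r, t > 0. -/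
theorem radial_velocity_pde
    (α : EuclideanSpace ℝ (Fin 3)) (hα : ‖α‖ = 1)
    (s : ℝ × ℝ → ℝ) (hs : ContDiff ℝ 1 s) (hs1 : ∀ p, |s p| < 1)
    (γ : ℝ × ℝ → ℝ) (hγ : ∀ p, γ p = 1 / Real.sqrt (1 - s p ^ 2))
    (F G : Fin 3 → EuclideanSpace ℝ (Fin 3) × EuclideanSpace ℝ (Fin 3) → ℝ)
    (hF : ∀ i p, F i p = γ (‖p.1‖, ‖p.2‖) * (α i * s (‖p.1‖, ‖p.2‖)))
    (hG : ∀ i p, G i p = γ (‖p.1‖, ‖p.2‖) * α i)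
    (a2 : ∀ r t : ℝ, 0 < r → 0 < t →
      ∑ i, (fderiv ℝ (F i) (r • α, t • α) (0, single i 1) +
            fderiv ℝ (G i) (r • α, t • α) (single i 1, 0)) = 0) :
    ∀ r t : ℝ, 0 < r → 0 < t →
      γ (r, t) * fderiv ℝ s (r, t) (0, 1) + s (r, t) * fderiv ℝ γ (r, t) (0, 1) +
        fderiv ℝ γ (r, t) (1, 0) = 0 := by
  intro r t hr ht
  -- differentiability of s and γ
  have hsd : ∀ p : ℝ × ℝ, DifferentiableAt ℝ s p := fun p => (hs.differentiable one_ne_zero) p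
  have hpos : ∀ p : ℝ × ℝ, (0:ℝ) < 1 - s p ^ 2 := by
    intro p
    have := abs_lt.mp (hs1 p)
    nlinarith [this.1, this.2]
  have hγd : ∀ p : ℝ × ℝ, DifferentiableAt ℝ γ p := by
    intro p
    have hγeq : γ = fun q => (Real.sqrt (1 - s q ^ 2))⁻¹ := by
      funext q; rw [hγ q, one_div]
    rw [hγeq]
    have hin : DifferentiableAt ℝ (fun q : ℝ × ℝ => 1 - s q ^ 2) p :=
      (differentiableAt_const 1).sub ((hsd p).pow 2)
    have hsq : DifferentiableAt ℝ (fun q : ℝ × ℝ => Real.sqrt (1 - s q ^ 2)) p :=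
      ((Real.hasDerivAt_sqrt (ne_of_gt (hpos p))).differentiableAt).comp p hin
    exact hsq.inv (ne_of_gt (Real.sqrt_pos.mpr (hpos p)))
  -- geometry of the base point
  have hα0 : α ≠ 0 := by
    intro h; rw [h, norm_zero] at hα; exact one_ne_zero hα.symm
  have hx1 : r • α ≠ 0 := smul_ne_zero (ne_of_gt hr) hα0
  have hx2 : t • α ≠ 0 := smul_ne_zero (ne_of_gt ht) hα0
  have hr' : ‖r • α‖ = r := by
    rw [norm_smul, hα, mul_one, Real.norm_eq_abs, abs_of_pos hr]
  have ht' : ‖t • α‖ = t := by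
    rw [norm_smul, hα, mul_one, Real.norm_eq_abs, abs_of_pos ht]
  -- derivative of the norm-pair map
  set L : EuclideanSpace ℝ (Fin 3) × EuclideanSpace ℝ (Fin 3) →L[ℝ] ℝ × ℝ :=
    ((‖r • α‖⁻¹ • innerSL ℝ (r • α)).comp
        (ContinuousLinearMap.fst ℝ (EuclideanSpace ℝ (Fin 3)) (EuclideanSpace ℝ (Fin 3)))).prod
      ((‖t • α‖⁻¹ • innerSL ℝ (t • α)).comp
        (ContinuousLinearMap.snd ℝ (EuclideanSpace ℝ (Fin 3)) (EuclideanSpace ℝ (Fin 3)))) with hL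
  have hN : HasFDerivAt
      (fun p : EuclideanSpace ℝ (Fin 3) × EuclideanSpace ℝ (Fin 3) => ((‖p.1‖ : ℝ), (‖p.2‖ : ℝ)))
      L (r • α, t • α) :=
    HasFDerivAt.prodMk ((hasFDerivAt_norm_aux hx1).comp (r • α, t • α) (hasFDerivAt_fst (p := (r • α, t • α))))
      ((hasFDerivAt_norm_aux hx2).comp (r • α, t • α) (hasFDerivAt_snd (p := (r • α, t • α))))
  -- evaluation of L on the relevant vectors
  have hinner : ∀ (c : ℝ) (i : Fin 3), (0:ℝ) < c →
      ‖c • α‖⁻¹ * (inner ℝ (c • α) ((single i 1 : EuclideanSpace ℝ (Fin 3))) : ℝ) = α i := by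
    intro c i hc
    have hcn : ‖c • α‖ = c := by
      rw [norm_smul, hα, mul_one, Real.norm_eq_abs, abs_of_pos hc]
    rw [hcn, real_inner_smul_left]
    have h2 : (inner ℝ α ((single i 1 : EuclideanSpace ℝ (Fin 3))) : ℝ) = α i := by
      rw [real_inner_comm]
      simp [PiLp.inner_apply, EuclideanSpace.single_apply]
    rw [h2]
    field_simp
  -- key: derivative of u ∘ N for differentiable u
  have key : ∀ u : ℝ × ℝ → ℝ, DifferentiableAt ℝ u (r, t) →
      fderiv ℝ (fun p : EuclideanSpace ℝ (Fin 3) × EuclideanSpace ℝ (Fin 3) =>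
          u (‖p.1‖, ‖p.2‖)) (r • α, t • α) = (fderiv ℝ u (r, t)).comp L := by
    intro u hu
    have hu' : HasFDerivAt u (fderiv ℝ u (r, t)) ((‖r • α‖, ‖t • α‖)) := by
      rw [hr', ht']; exact hu.hasFDerivAt
    exact (hu'.comp (r • α, t • α) hN).fderiv
  have hLF : ∀ i : Fin 3,
      L ((0 : EuclideanSpace ℝ (Fin 3)), (single i 1 : EuclideanSpace ℝ (Fin 3))) =
        ((0:ℝ), α i) := by
    intro i
    have h2 := hinner t i ht
    simp only [hL, ContinuousLinearMap.prod_apply, ContinuousLinearMap.coe_comp',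
      Function.comp_apply, ContinuousLinearMap.coe_fst', ContinuousLinearMap.coe_snd',
      ContinuousLinearMap.smul_apply, innerSL_apply_apply, smul_eq_mul]
    rw [h2]
    simp
  have hLG : ∀ i : Fin 3,
      L ((single i 1 : EuclideanSpace ℝ (Fin 3)), (0 : EuclideanSpace ℝ (Fin 3))) =
        ((α i : ℝ), 0) := by
    intro i
    have h1 := hinner r i hr
    simp only [hL, ContinuousLinearMap.prod_apply, ContinuousLinearMap.coe_comp',
      Function.comp_apply, ContinuousLinearMap.coe_fst', ContinuousLinearMap.coe_snd',
      ContinuousLinearMap.smul_apply, innerSL_apply_apply, smul_eq_mul]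
    rw [h1]
    simp
  set A : ℝ := fderiv ℝ (fun q : ℝ × ℝ => γ q * s q) (r, t) (0, 1) with hA
  set B : ℝ := fderiv ℝ γ (r, t) (1, 0) with hB
  have hFterm : ∀ i : Fin 3,
      fderiv ℝ (F i) (r • α, t • α) (0, single i 1) = α i * (α i * A) := by
    intro i
    have hFi : F i = fun p : EuclideanSpace ℝ (Fin 3) × EuclideanSpace ℝ (Fin 3) =>
        (fun q : ℝ × ℝ => α i * (γ q * s q)) (‖p.1‖, ‖p.2‖) := by
      funext p; rw [hF i p]; ring
    have hu : DifferentiableAt ℝ (fun q : ℝ × ℝ => α i * (γ q * s q)) (r, t) :=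
      ((hγd _).mul (hsd _)).const_mul _
    rw [hFi, key _ hu, ContinuousLinearMap.comp_apply, hLF i]
    have h3 : ((0:ℝ), α i) = α i • ((0:ℝ), (1:ℝ)) := by simp
    rw [h3, (fderiv ℝ _ (r, t)).map_smul, smul_eq_mul]
    congr 1
    rw [fderiv_const_mul (a := fun q => γ q * s q) ((hγd _).mul (hsd _)) (α i)]
    simp [hA]
  have hGterm : ∀ i : Fin 3,
      fderiv ℝ (G i) (r • α, t • α) (single i 1, 0) = α i * (α i * B) := by
    intro i
    have hGi : G i = fun p : EuclideanSpace ℝ (Fin 3) × EuclideanSpace ℝ (Fin 3) =>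
        (fun q : ℝ × ℝ => α i * γ q) (‖p.1‖, ‖p.2‖) := by
      funext p; rw [hG i p]; ring
    have hu : DifferentiableAt ℝ (fun q : ℝ × ℝ => α i * γ q) (r, t) :=
      (hγd _).const_mul _
    rw [hGi, key _ hu, ContinuousLinearMap.comp_apply, hLG i]
    have h3 : ((α i : ℝ), (0:ℝ)) = α i • ((1:ℝ), (0:ℝ)) := by simp
    rw [h3, (fderiv ℝ _ (r, t)).map_smul, smul_eq_mul]
    congr 1
    rw [fderiv_const_mul (hγd _) (α i)]
    simp [hB]
  -- the sum identity
  have hsum := a2 r t hr ht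
  have hαsq : ∑ i : Fin 3, α i * α i = 1 := by
    have h1 : (inner ℝ α α : ℝ) = 1 := by
      rw [real_inner_self_eq_norm_sq, hα]; norm_num
    rw [← h1, PiLp.inner_apply]
    simp [sq]
  have hsum2 : ∑ i : Fin 3, (α i * (α i * A) + α i * (α i * B)) = 0 := by
    rw [← hsum]
    exact Finset.sum_congr rfl fun i _ => by rw [hFterm i, hGterm i]
  have hAB : A + B = 0 := by
    have h4 : ∑ i : Fin 3, (α i * (α i * A) + α i * (α i * B)) =
        (∑ i : Fin 3, α i * α i) * (A + B) := by
      rw [Finset.sum_mul]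
      exact Finset.sum_congr rfl fun i _ => by ring
    rw [h4, hαsq, one_mul] at hsum2
    exact hsum2
  -- unfold A using the product rule
  have hAeq : A = γ (r, t) * fderiv ℝ s (r, t) (0, 1) + s (r, t) * fderiv ℝ γ (r, t) (0, 1) := by
    rw [hA, fderiv_fun_mul (hγd _) (hsd _)]
    simp [smul_eq_mul]
  linarith
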